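/- Let f = f_A + f_R with f_A, f_R : [0,∞) → ℝ continuous, f_R ≥ 0, f_A ≤ 0; assume there exist 0 < d_a < d_e such that f(ρ) > 0 for 0 ≤ ρ < d_a, f(ρ) ≤ 0 for ρ > d_a, and f is strictly decreasing on [0,d_e]. Define G(R) = ∫₀^π f(R √((1 − cos φ)² + sin² φ)) (1 − cos φ) dφ. If G(d_e/2) < 0, then there exists a unique R̄ ∈ (0, d_e/2] with G(R̄) = 0, and moreover R̄ ∈ (d_a/2, d_e/2]. -/

import Mathlib

open Real

/-- The function `G(R) = ∫₀^π f(R √((1 − cos φ)² + sin² φ)) (1 − cos φ) dφ`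
appearing in the ring-equilibrium condition. -/
noncomputable def ringG (f : ℝ → ℝ) (R : ℝ) : ℝ :=
  ∫ φ in (0:ℝ)..Real.pi,
    f (R * Real.sqrt ((1 - Real.cos φ) ^ 2 + Real.sin φ ^ 2)) * (1 - Real.cos φ)

noncomputable def ringS (φ : ℝ) : ℝ :=
  Real.sqrt ((1 - Real.cos φ) ^ 2 + Real.sin φ ^ 2)

lemma ringS_nonneg (φ : ℝ) : 0 ≤ ringS φ := Real.sqrt_nonneg _

lemma ringS_le_two (φ : ℝ) : ringS φ ≤ 2 := by
  have h : (1 - Real.cos φ) ^ 2 + Real.sin φ ^ 2 ≤ 4 := by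
    nlinarith [Real.neg_one_le_cos φ, Real.sin_sq_add_cos_sq φ]
  have := Real.sqrt_le_sqrt h
  rwa [show (4:ℝ) = 2 ^ 2 by norm_num, Real.sqrt_sq (by norm_num : (0:ℝ) ≤ 2)] at this

lemma ringS_pos {φ : ℝ} (h0 : 0 < φ) (hpi : φ ≤ Real.pi) : 0 < ringS φ := by
  have hcos : Real.cos φ < 1 := by
    have := Real.strictAntiOn_cos (Set.mem_Icc.2 ⟨le_rfl, Real.pi_pos.le⟩)
      (Set.mem_Icc.2 ⟨h0.le, hpi⟩) h0
    simpa using this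
  apply Real.sqrt_pos.2
  nlinarith [Real.sin_sq_add_cos_sq φ]

lemma continuous_ringS : Continuous ringS := by
  unfold ringS; fun_prop

lemma ringS_pi_div_two : ringS (Real.pi / 2) = Real.sqrt 2 := by
  simp [ringS, Real.cos_pi_div_two, Real.sin_pi_div_two]
  norm_num

lemma sqrt_two_lt_two' : Real.sqrt 2 < 2 := by
  nlinarith [Real.sq_sqrt (show (0:ℝ) ≤ 2 by norm_num), Real.sqrt_nonneg 2]

/-- For `f = f_A + f_R` with continuous `f_R ≥ 0`, `f_A ≤ 0`,
positive on `[0, d_a)`, nonpositive on `(d_a, ∞)` and strictly decreasing on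
`[0, d_e]` (`0 < d_a < d_e`): if `G(d_e/2) < 0` then there is a unique
`R̄ ∈ (0, d_e/2]` with `G(R̄) = 0`, and this `R̄` lies in `(d_a/2, d_e/2]`. -/
theorem ring_equilibrium_exists_unique
    (fA fR : ℝ → ℝ)
    (hfA : ContinuousOn fA (Set.Ici 0)) (hfR : ContinuousOn fR (Set.Ici 0))
    (hfRpos : ∀ ρ ∈ Set.Ici (0:ℝ), 0 ≤ fR ρ)
    (hfAneg : ∀ ρ ∈ Set.Ici (0:ℝ), fA ρ ≤ 0)
    (da de : ℝ) (hda : 0 < da) (hdade : da < de)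
    (hpos : ∀ ρ ∈ Set.Ico (0:ℝ) da, 0 < fA ρ + fR ρ)
    (hneg : ∀ ρ ∈ Set.Ioi da, fA ρ + fR ρ ≤ 0)
    (hdec : StrictAntiOn (fun ρ => fA ρ + fR ρ) (Set.Icc 0 de))
    (hGneg : ringG (fun ρ => fA ρ + fR ρ) (de / 2) < 0) :
    ∃ Rbar : ℝ, Rbar ∈ Set.Ioc (0:ℝ) (de / 2)
      ∧ ringG (fun ρ => fA ρ + fR ρ) Rbar = 0
      ∧ (∀ R ∈ Set.Ioc (0:ℝ) (de / 2),
          ringG (fun ρ => fA ρ + fR ρ) R = 0 → R = Rbar)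
      ∧ Rbar ∈ Set.Ioc (da / 2) (de / 2) := by
  set f : ℝ → ℝ := fun ρ => fA ρ + fR ρ with hf_def
  have hde : 0 < de := hda.trans hdade
  have hfc : ContinuousOn f (Set.Ici 0) := hfA.add hfR
  set fe : ℝ → ℝ := fun x => f (max x 0) with hfe_def
  have hfe_cont : Continuous fe :=
    hfc.comp_continuous (continuous_id.max continuous_const)
      (fun x => Set.mem_Ici.2 (le_max_right x 0))
  have hfe_eq : ∀ x, 0 ≤ x → fe x = f x := by
    intro x hx; simp [hfe_def, max_eq_left hx]
  -- extended integral
  set G : ℝ → ℝ := fun R => ∫ φ in (0:ℝ)..Real.pi, fe (R * ringS φ) * (1 - Real.cos φ)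
    with hG_def
  have hring_eq : ∀ R : ℝ, 0 ≤ R → ringG f R = G R := by
    intro R hR
    apply intervalIntegral.integral_congr
    intro φ _
    have h1 : fe (R * ringS φ) = f (R * ringS φ) :=
      hfe_eq _ (mul_nonneg hR (ringS_nonneg φ))
    simp only [ringS] at h1 ⊢
    rw [← h1]
  have hGcont : Continuous G := by
    apply intervalIntegral.continuous_parametric_intervalIntegral_of_continuous'
    exact (hfe_cont.comp ((continuous_fst).mul
        (continuous_ringS.comp continuous_snd))).mul
        (continuous_const.sub (Real.continuous_cos.comp continuous_snd))
  -- continuity of integrand in φ for fixed R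
  have hint_cont : ∀ R : ℝ, Continuous (fun φ => fe (R * ringS φ) * (1 - Real.cos φ)) := by
    intro R
    exact (hfe_cont.comp (continuous_const.mul continuous_ringS)).mul
      (continuous_const.sub Real.continuous_cos)
  -- strict monotonicity of G on [0, de/2]
  have hGanti : StrictAntiOn G (Set.Icc 0 (de / 2)) := by
    intro R1 hR1 R2 hR2 h12
    have key : ∀ φ, 0 < φ → φ ≤ Real.pi →
        fe (R2 * ringS φ) < fe (R1 * ringS φ) := by
      intro φ h0 hpi
      have hS := ringS_pos h0 hpi
      have ha1 : R1 * ringS φ ∈ Set.Icc 0 de := by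
        constructor
        · exact mul_nonneg hR1.1 hS.le
        · calc R1 * ringS φ ≤ (de / 2) * 2 :=
                mul_le_mul hR1.2 (ringS_le_two φ) hS.le (by linarith)
            _ = de := by ring
      have ha2 : R2 * ringS φ ∈ Set.Icc 0 de := by
        constructor
        · exact mul_nonneg (hR1.1.trans h12.le) hS.le
        · calc R2 * ringS φ ≤ (de / 2) * 2 :=
                mul_le_mul hR2.2 (ringS_le_two φ) hS.le (by linarith)
            _ = de := by ring
      have hlt : R1 * ringS φ < R2 * ringS φ := mul_lt_mul_of_pos_right h12 hS
      have := hdec ha1 ha2 hlt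
      rwa [← hfe_eq _ ha1.1, ← hfe_eq _ ha2.1] at this
    apply intervalIntegral.integral_lt_integral_of_continuousOn_of_le_of_exists_lt Real.pi_pos
      (hint_cont R2).continuousOn (hint_cont R1).continuousOn
    · intro φ hφ
      have hw : 0 ≤ 1 - Real.cos φ := by linarith [Real.cos_le_one φ]
      exact mul_le_mul_of_nonneg_right (key φ hφ.1 hφ.2).le hw
    · refine ⟨Real.pi / 2, ⟨by positivity, by linarith [Real.pi_pos]⟩, ?_⟩
      have h := key (Real.pi / 2) (by positivity) (by linarith [Real.pi_pos])
      have hw : (0:ℝ) < 1 - Real.cos (Real.pi / 2) := by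
        rw [Real.cos_pi_div_two]; norm_num
      exact mul_lt_mul_of_pos_right h hw
  -- f is nonneg at da (by continuity from the left)
  have hfda : 0 ≤ f da := by
    have h1 : ContinuousWithinAt f (Set.Ici 0) da := hfc da hda.le
    have h2 : ContinuousWithinAt f (Set.Ico 0 da) da := h1.mono Set.Ico_subset_Ici_self
    have htend : Filter.Tendsto f (nhdsWithin da (Set.Iio da)) (nhds (f da)) := by
      have := h2.tendsto
      rwa [nhdsWithin_Ico_eq_nhdsLT hda] at this
    refine ge_of_tendsto htend ?_
    have hev1 : ∀ᶠ x in nhdsWithin da (Set.Iio da), x ∈ Set.Iio da :=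
      self_mem_nhdsWithin
    have hev2 : ∀ᶠ x in nhdsWithin da (Set.Iio da), 0 < x :=
      eventually_nhdsWithin_of_eventually_nhds (eventually_gt_nhds hda)
    filter_upwards [hev1, hev2] with x hx1 hx2
    exact (hpos x ⟨hx2.le, hx1⟩).le
  have hfnonneg : ∀ ρ ∈ Set.Icc (0:ℝ) da, 0 ≤ f ρ := by
    intro ρ hρ
    rcases lt_or_eq_of_le hρ.2 with h | h
    · exact (hpos ρ ⟨hρ.1, h⟩).le
    · rw [h]; exact hfda
  -- G(da/2) > 0
  have hGpos : 0 < G (da / 2) := by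
    rw [show (0:ℝ) = ∫ φ in (0:ℝ)..Real.pi, (0:ℝ) by simp]
    apply intervalIntegral.integral_lt_integral_of_continuousOn_of_le_of_exists_lt Real.pi_pos
      continuousOn_const (hint_cont _).continuousOn
    · intro φ hφ
      have hw : 0 ≤ 1 - Real.cos φ := by linarith [Real.cos_le_one φ]
      have harg : (da / 2) * ringS φ ∈ Set.Icc (0:ℝ) da := by
        constructor
        · exact mul_nonneg (by linarith) (ringS_nonneg φ)
        · calc (da / 2) * ringS φ ≤ (da / 2) * 2 :=
                mul_le_mul_of_nonneg_left (ringS_le_two φ) (by linarith)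
            _ = da := by ring
      have := hfnonneg _ harg
      rw [← hfe_eq _ harg.1] at this
      exact mul_nonneg this hw
    · refine ⟨Real.pi / 2, ⟨by positivity, by linarith [Real.pi_pos]⟩, ?_⟩
      have harg : (da / 2) * ringS (Real.pi / 2) ∈ Set.Ico (0:ℝ) da := by
        rw [ringS_pi_div_two]
        constructor
        · exact mul_nonneg (by linarith) (Real.sqrt_nonneg 2)
        · calc (da / 2) * Real.sqrt 2 < (da / 2) * 2 :=
                mul_lt_mul_of_pos_left sqrt_two_lt_two' (by linarith)
            _ = da := by ring
      have hfp : 0 < f (da / 2 * ringS (Real.pi / 2)) := hpos _ harg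
      rw [← hfe_eq _ harg.1] at hfp
      have hw : (0:ℝ) < 1 - Real.cos (Real.pi / 2) := by
        rw [Real.cos_pi_div_two]; norm_num
      exact mul_pos hfp hw
  -- transfer hGneg
  have hGneg' : G (de / 2) < 0 := by
    rw [← hring_eq (de / 2) (by linarith)]; exact hGneg
  -- intermediate value theorem
  have hIVT := intermediate_value_Icc' (show da / 2 ≤ de / 2 by linarith)
    hGcont.continuousOn
  have h0mem : (0:ℝ) ∈ Set.Icc (G (de / 2)) (G (da / 2)) := ⟨hGneg'.le, hGpos.le⟩
  obtain ⟨Rbar, hRmem, hGR⟩ := hIVT h0mem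
  have hRne : Rbar ≠ da / 2 := by
    intro h; rw [h] at hGR; exact hGpos.ne' hGR
  have hRgt : da / 2 < Rbar := lt_of_le_of_ne hRmem.1 (Ne.symm hRne)
  have hRpos : 0 < Rbar := lt_trans (by linarith) hRgt
  refine ⟨Rbar, ⟨hRpos, hRmem.2⟩, ?_, ?_, ⟨hRgt, hRmem.2⟩⟩
  · rw [hring_eq Rbar hRpos.le]; exact hGR
  · intro R hR hRz
    have hGRz : G R = 0 := by rw [← hring_eq R hR.1.le]; exact hRz
    have hmem1 : R ∈ Set.Icc (0:ℝ) (de / 2) := ⟨hR.1.le, hR.2⟩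
    have hmem2 : Rbar ∈ Set.Icc (0:ℝ) (de / 2) := ⟨hRpos.le, hRmem.2⟩
    exact hGanti.injOn hmem1 hmem2 (by rw [hGRz, hGR])
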